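/- arXiv:math/0612783 — 7 statements merged into one kernel-verified Lean document; each statement's English description precedes it below -/
import Mathlib

section
/- In a randomized experiment, the observed mean outcome among treated survivors is a mixture over the principal strata LL and LD: if 0 < P(Z = T), Z is independent of (S_T, S_C, Y_T), Y_T is integrable, and P(LL) + P(LD) > 0, then E[Y^obs | Z = T, S^obs = L] = (P(LL)·E[Y_T | LL] + P(LD)·E[Y_T | LD]) / (P(LL) + P(LD)). -/
open MeasureTheory ProbabilityTheory

private lemma integral_cond_eq {Ω : Type*} [MeasurableSpace Ω] (μ : Measure Ω)
    (s : Set Ω) (f : Ω → ℝ) :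
    (∫ ω, f ω ∂μ[|s]) = (μ s).toReal⁻¹ * ∫ ω in s, f ω ∂μ := by
  rw [ProbabilityTheory.cond, integral_smul_measure, ENNReal.toReal_inv, smul_eq_mul]

/-- The observed mean outcome among treated survivors is a mixture over the principal
strata `LL` and `LD`:
`E[Y^obs | Z = T, S^obs = L] = (P(LL)·E[Y_T | LL] + P(LD)·E[Y_T | LD]) / (P(LL) + P(LD))`. -/
theorem treated_survivor_mean_is_mixture
    {Ω : Type*} [MeasurableSpace Ω] (μ : Measure Ω) [IsProbabilityMeasure μ]
    (Z S_T S_C : Ω → Bool) (Y_T Y_C : Ω → ℝ)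
    (hZ : Measurable Z) (hST : Measurable S_T) (hSC : Measurable S_C)
    (hYT : Measurable Y_T) (hYC : Measurable Y_C)
    (hpos : 0 < μ {ω | Z ω = true})
    (hindep : IndepFun Z (fun ω => (S_T ω, S_C ω, Y_T ω)) μ)
    (hint : Integrable Y_T μ)
    (hstrata : 0 < μ {ω | S_T ω = true ∧ S_C ω = true}
        + μ {ω | S_T ω = true ∧ S_C ω = false}) :
    (∫ ω, (if Z ω then Y_T ω else Y_C ω)
        ∂μ[|{ω | Z ω = true ∧ (if Z ω then S_T ω else S_C ω) = true}]) =
      ((μ {ω | S_T ω = true ∧ S_C ω = true}).toReal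
          * ∫ ω, Y_T ω ∂μ[|{ω | S_T ω = true ∧ S_C ω = true}]
        + (μ {ω | S_T ω = true ∧ S_C ω = false}).toReal
          * ∫ ω, Y_T ω ∂μ[|{ω | S_T ω = true ∧ S_C ω = false}])
      / ((μ {ω | S_T ω = true ∧ S_C ω = true}).toReal
        + (μ {ω | S_T ω = true ∧ S_C ω = false}).toReal) := by
  classical
  set ZS : Set Ω := {ω | Z ω = true} with hZSdef
  set Ssurv : Set Ω := {ω | S_T ω = true} with hSdef
  set LL : Set Ω := {ω | S_T ω = true ∧ S_C ω = true} with hLLdef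
  set LD : Set Ω := {ω | S_T ω = true ∧ S_C ω = false} with hLDdef
  have hmZS : MeasurableSet ZS := hZ (measurableSet_singleton true)
  have hmS : MeasurableSet Ssurv := hST (measurableSet_singleton true)
  have hmLL : MeasurableSet LL := by
    have : LL = S_T ⁻¹' {true} ∩ S_C ⁻¹' {true} := by ext ω; simp [hLLdef]
    rw [this]; exact (hST (measurableSet_singleton true)).inter (hSC (measurableSet_singleton true))
  have hmLD : MeasurableSet LD := by
    have : LD = S_T ⁻¹' {true} ∩ S_C ⁻¹' {false} := by ext ω; simp [hLDdef]
    rw [this]; exact (hST (measurableSet_singleton true)).inter (hSC (measurableSet_singleton false))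
  -- the conditioning set equals ZS ∩ Ssurv
  have hAset : {ω | Z ω = true ∧ (if Z ω then S_T ω else S_C ω) = true} = ZS ∩ Ssurv := by
    ext ω
    by_cases h : Z ω = true <;> simp [h, hZSdef, hSdef]
  have hmA : MeasurableSet (ZS ∩ Ssurv) := hmZS.inter hmS
  -- independence of indicator functions
  have hφ : Measurable (fun b : Bool => if b then (1:ℝ) else 0) := Measurable.of_discrete
  have hψ : Measurable (fun p : Bool × Bool × ℝ => if p.1 then p.2.2 else 0) := by
    refine Measurable.ite ?_ (measurable_snd.comp measurable_snd) measurable_const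
    exact measurable_fst (measurableSet_singleton true)
  have hψ1 : Measurable (fun p : Bool × Bool × ℝ => if p.1 then (1:ℝ) else 0) := by
    refine Measurable.ite ?_ measurable_const measurable_const
    exact measurable_fst (measurableSet_singleton true)
  have hf_eq : (fun ω => if Z ω then (1:ℝ) else 0) = Set.indicator ZS (fun _ => (1:ℝ)) := by
    ext ω; by_cases h : Z ω = true <;> simp [h, hZSdef, Set.indicator_apply]
  have hg_eq : (fun ω => if S_T ω then Y_T ω else 0) = Set.indicator Ssurv Y_T := by
    ext ω; by_cases h : S_T ω = true <;> simp [h, hSdef, Set.indicator_apply]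
  have hg1_eq : (fun ω => if S_T ω then (1:ℝ) else 0) = Set.indicator Ssurv (fun _ => (1:ℝ)) := by
    ext ω; by_cases h : S_T ω = true <;> simp [h, hSdef, Set.indicator_apply]
  have hIf : Integrable (fun ω => if Z ω then (1:ℝ) else 0) μ := by
    rw [hf_eq]; exact (integrable_const 1).indicator hmZS
  have hIg : Integrable (fun ω => if S_T ω then Y_T ω else 0) μ := by
    rw [hg_eq]; exact hint.indicator hmS
  have hIg1 : Integrable (fun ω => if S_T ω then (1:ℝ) else 0) μ := by
    rw [hg1_eq]; exact (integrable_const 1).indicator hmS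
  have hindep' : IndepFun (fun ω => if Z ω then (1:ℝ) else 0)
      (fun ω => if S_T ω then Y_T ω else 0) μ := by
    exact hindep.comp hφ hψ
  have hindep1 : IndepFun (fun ω => if Z ω then (1:ℝ) else 0)
      (fun ω => if S_T ω then (1:ℝ) else 0) μ := by
    exact hindep.comp hφ hψ1
  have hintf : (∫ ω, (if Z ω then (1:ℝ) else 0) ∂μ) = (μ ZS).toReal := by
    rw [hf_eq, integral_indicator hmZS]; simp [measureReal_def]
  have hintg : (∫ ω, (if S_T ω then Y_T ω else 0) ∂μ) = ∫ ω in Ssurv, Y_T ω ∂μ := by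
    rw [hg_eq, integral_indicator hmS]
  have hintg1 : (∫ ω, (if S_T ω then (1:ℝ) else 0) ∂μ) = (μ Ssurv).toReal := by
    rw [hg1_eq, integral_indicator hmS]; simp [measureReal_def]
  -- product identities
  have hprod : (∫ ω in ZS ∩ Ssurv, Y_T ω ∂μ)
      = (μ ZS).toReal * ∫ ω in Ssurv, Y_T ω ∂μ := by
    have h1 : (∫ ω, ((fun ω => if Z ω then (1:ℝ) else 0) * fun ω => if S_T ω then Y_T ω else 0) ω ∂μ)
        = (∫ ω, (if Z ω then (1:ℝ) else 0) ∂μ) * ∫ ω, (if S_T ω then Y_T ω else 0) ∂μ :=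
      hindep'.integral_mul_eq_mul_integral hIf.aestronglyMeasurable hIg.aestronglyMeasurable
    have h2 : ((fun ω => if Z ω then (1:ℝ) else 0) * fun ω => if S_T ω then Y_T ω else 0)
        = Set.indicator (ZS ∩ Ssurv) Y_T := by
      ext ω
      by_cases hz : Z ω = true <;> by_cases hs : S_T ω = true <;>
        simp [hz, hs, hZSdef, hSdef, Set.indicator_apply]
    rw [h2, integral_indicator hmA] at h1
    rw [h1, hintf, hintg]
  have hmeasA : (μ (ZS ∩ Ssurv)).toReal = (μ ZS).toReal * (μ Ssurv).toReal := by
    have h1 : (∫ ω, ((fun ω => if Z ω then (1:ℝ) else 0) * fun ω => if S_T ω then (1:ℝ) else 0) ω ∂μ)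
        = (∫ ω, (if Z ω then (1:ℝ) else 0) ∂μ) * ∫ ω, (if S_T ω then (1:ℝ) else 0) ∂μ :=
      hindep1.integral_mul_eq_mul_integral hIf.aestronglyMeasurable hIg1.aestronglyMeasurable
    have h2 : ((fun ω => if Z ω then (1:ℝ) else 0) * fun ω => if S_T ω then (1:ℝ) else 0)
        = Set.indicator (ZS ∩ Ssurv) (fun _ => (1:ℝ)) := by
      ext ω
      by_cases hz : Z ω = true <;> by_cases hs : S_T ω = true <;>
        simp [hz, hs, hZSdef, hSdef, Set.indicator_apply]
    rw [h2, integral_indicator hmA] at h1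
    simpa [hintf, hintg1, measureReal_def] using h1
  -- decomposition of Ssurv
  have hSunion : Ssurv = LL ∪ LD := by
    ext ω
    by_cases hc : S_C ω = true <;> simp [hSdef, hLLdef, hLDdef, hc] <;> simp_all
  have hdisj : Disjoint LL LD := by
    rw [Set.disjoint_left]; rintro ω ⟨_, h1⟩ ⟨_, h2⟩; rw [h1] at h2; exact Bool.noConfusion h2
  have hmeasS : μ Ssurv = μ LL + μ LD := by
    rw [hSunion, measure_union hdisj hmLD]
  have hintS : (∫ ω in Ssurv, Y_T ω ∂μ) = (∫ ω in LL, Y_T ω ∂μ) + ∫ ω in LD, Y_T ω ∂μ := by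
    rw [hSunion, setIntegral_union hdisj hmLD hint.integrableOn hint.integrableOn]
  have hSpos : 0 < μ Ssurv := by rw [hmeasS]; exact hstrata
  have hSne : (μ Ssurv).toReal ≠ 0 := by
    refine ENNReal.toReal_ne_zero.mpr ⟨hSpos.ne', measure_ne_top μ _⟩
  have hZne : (μ ZS).toReal ≠ 0 := by
    refine ENNReal.toReal_ne_zero.mpr ⟨hpos.ne', measure_ne_top μ _⟩
  -- LHS computation
  have hLHS : (∫ ω, (if Z ω then Y_T ω else Y_C ω)
      ∂μ[|{ω | Z ω = true ∧ (if Z ω then S_T ω else S_C ω) = true}])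
      = (μ Ssurv).toReal⁻¹ * ∫ ω in Ssurv, Y_T ω ∂μ := by
    rw [hAset, integral_cond_eq]
    have hcongr : (∫ ω in ZS ∩ Ssurv, (if Z ω then Y_T ω else Y_C ω) ∂μ)
        = ∫ ω in ZS ∩ Ssurv, Y_T ω ∂μ := by
      refine setIntegral_congr_fun hmA ?_
      rintro ω ⟨hz, _⟩
      simp only [hZSdef, Set.mem_setOf_eq] at hz
      simp [hz]
    rw [hcongr, hprod, hmeasA]
    field_simp
  -- RHS term simplification
  have hterm : ∀ (E : Set Ω), MeasurableSet E →
      (μ E).toReal * ∫ ω, Y_T ω ∂μ[|E] = ∫ ω in E, Y_T ω ∂μ := by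
    intro E hmE
    rw [integral_cond_eq]
    by_cases hE : μ E = 0
    · simp [hE, Measure.restrict_eq_zero.mpr hE]
    · have : (μ E).toReal ≠ 0 := ENNReal.toReal_ne_zero.mpr ⟨hE, measure_ne_top μ _⟩
      field_simp
  rw [hLHS, hterm LL hmLL, hterm LD hmLD, hintS]
  have : (μ LL).toReal + (μ LD).toReal = (μ Ssurv).toReal := by
    rw [hmeasS, ENNReal.toReal_add (measure_ne_top μ _) (measure_ne_top μ _)]
  rw [this, div_eq_inv_mul]
end

section
/- In a randomized experiment, the observed mean outcome among control survivors is a mixture over the principal strata LL and DL: if P(Z = T) < 1, Z is independent of (S_T, S_C, Y_C), Y_C is integrable, and P(LL) + P(DL) > 0, then E[Y^obs | Z = C, S^obs = L] = (P(LL)·E[Y_C | LL] + P(DL)·E[Y_C | DL]) / (P(LL) + P(DL)). -/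
open MeasureTheory ProbabilityTheory

lemma cond_integral_eq {Ω : Type*} [MeasurableSpace Ω] (μ : Measure Ω) (s : Set Ω) (f : Ω → ℝ) :
    ∫ ω, f ω ∂μ[|s] = (μ s).toReal⁻¹ * ∫ ω in s, f ω ∂μ := by
  rw [ProbabilityTheory.cond, integral_smul_measure, ENNReal.toReal_inv, smul_eq_mul]

/-- The observed mean outcome among control survivors is a mixture over the principal
strata `LL` and `DL`:
`E[Y^obs | Z = C, S^obs = L] = (P(LL)·E[Y_C | LL] + P(DL)·E[Y_C | DL]) / (P(LL) + P(DL))`. -/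
theorem control_survivor_mean_is_mixture
    {Ω : Type*} [MeasurableSpace Ω] (μ : Measure Ω) [IsProbabilityMeasure μ]
    (Z S_T S_C : Ω → Bool) (Y_T Y_C : Ω → ℝ)
    (hZ : Measurable Z) (hST : Measurable S_T) (hSC : Measurable S_C)
    (hYT : Measurable Y_T) (hYC : Measurable Y_C)
    (hlt : μ {ω | Z ω = true} < 1)
    (hindep : IndepFun Z (fun ω => (S_T ω, S_C ω, Y_C ω)) μ)
    (hint : Integrable Y_C μ)
    (hstrata : 0 < μ {ω | S_T ω = true ∧ S_C ω = true}
        + μ {ω | S_T ω = false ∧ S_C ω = true}) :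
    (∫ ω, (if Z ω then Y_T ω else Y_C ω)
        ∂μ[|{ω | Z ω = false ∧ (if Z ω then S_T ω else S_C ω) = true}]) =
      ((μ {ω | S_T ω = true ∧ S_C ω = true}).toReal
          * ∫ ω, Y_C ω ∂μ[|{ω | S_T ω = true ∧ S_C ω = true}]
        + (μ {ω | S_T ω = false ∧ S_C ω = true}).toReal
          * ∫ ω, Y_C ω ∂μ[|{ω | S_T ω = false ∧ S_C ω = true}])
      / ((μ {ω | S_T ω = true ∧ S_C ω = true}).toReal
        + (μ {ω | S_T ω = false ∧ S_C ω = true}).toReal) := by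
  -- basic sets
  set A : Set Ω := {ω | Z ω = false} with hA_def
  set B : Set Ω := {ω | S_C ω = true} with hB_def
  set LL : Set Ω := {ω | S_T ω = true ∧ S_C ω = true} with hLL_def
  set DL : Set Ω := {ω | S_T ω = false ∧ S_C ω = true} with hDL_def
  have hmA : MeasurableSet A := hZ (measurableSet_singleton false)
  have hmB : MeasurableSet B := hSC (measurableSet_singleton true)
  have hmLL : MeasurableSet LL :=
    (hST (measurableSet_singleton true)).inter (hSC (measurableSet_singleton true))
  have hmDL : MeasurableSet DL :=
    (hST (measurableSet_singleton false)).inter (hSC (measurableSet_singleton true))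
  -- the conditioning event is A ∩ B
  have hsE : {ω | Z ω = false ∧ (if Z ω then S_T ω else S_C ω) = true} = A ∩ B := by
    ext ω
    by_cases h : Z ω = true <;> simp [A, B, h]
  -- LL ∪ DL = B
  have hunion : LL ∪ DL = B := by
    ext ω
    by_cases h : S_T ω = true <;> simp [LL, DL, B, h]
  have hdisj : Disjoint LL DL := by
    rw [Set.disjoint_left]
    rintro ω ⟨h1, _⟩ ⟨h2, _⟩
    simp [h1] at h2
  -- measure of B splits
  have hmeasB : μ B = μ LL + μ DL := by
    rw [← hunion, measure_union hdisj hmDL]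
  -- abbrev reals
  set p := (μ A).toReal with hp_def
  set q := (μ B).toReal with hq_def
  set a := (μ LL).toReal with ha_def
  set b := (μ DL).toReal with hb_def
  have hfin : ∀ s : Set Ω, μ s ≠ ⊤ := fun s => (measure_lt_top μ s).ne
  have hq_ab : q = a + b := by
    rw [hq_def, hmeasB, ENNReal.toReal_add (hfin _) (hfin _)]
  -- p > 0
  have hApos : 0 < p := by
    have hAc : A = {ω | Z ω = true}ᶜ := by
      ext ω; by_cases h : Z ω = true <;> simp [A, h]
    have : μ A = 1 - μ {ω | Z ω = true} := by
      rw [hAc, measure_compl (s := {ω | Z ω = true}) (hZ (measurableSet_singleton true)) (hfin _), measure_univ]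
    have hpos : 0 < μ A := by
      rw [this]
      exact tsub_pos_of_lt hlt
    exact ENNReal.toReal_pos hpos.ne' (hfin _)
  -- q > 0
  have hqpos : 0 < q := by
    rw [hq_def, hmeasB]
    exact ENNReal.toReal_pos hstrata.ne' (ENNReal.add_ne_top.mpr ⟨hfin _, hfin _⟩)
  -- independence consequences
  have hpairm : Measurable (fun ω => (S_T ω, S_C ω, Y_C ω)) := (hST.prodMk (hSC.prodMk hYC))
  -- μ (A ∩ B) = μ A * μ B
  have hmeasAB : μ (A ∩ B) = μ A * μ B := by
    have := hindep.measure_inter_preimage_eq_mul {false}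
        {p : Bool × Bool × ℝ | p.2.1 = true}
        (measurableSet_singleton false)
        ((measurable_fst.comp measurable_snd) (measurableSet_singleton true))
    simpa [A, B, Set.preimage, Set.mem_singleton_iff] using this
  -- ∫ over A ∩ B of Y_C = p * ∫ over B of Y_C
  have hintAB : ∫ ω in A ∩ B, Y_C ω ∂μ = p * ∫ ω in B, Y_C ω ∂μ := by
    set f : Bool → ℝ := fun c => if c = false then 1 else 0 with hf_def
    set g : Bool × Bool × ℝ → ℝ := fun x => if x.2.1 = true then x.2.2 else 0 with hg_def
    have hfm : Measurable f := measurable_from_top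
    have hgm : Measurable g := by
      apply Measurable.ite
      · exact (measurable_fst.comp measurable_snd) (measurableSet_singleton true)
      · exact measurable_snd.comp measurable_snd
      · exact measurable_const
    have hXY : IndepFun (f ∘ Z) (g ∘ fun ω => (S_T ω, S_C ω, Y_C ω)) μ :=
      hindep.comp hfm hgm
    have hmul := hXY.integral_mul_eq_mul_integral ((hfm.comp hZ).aestronglyMeasurable)
      ((hgm.comp hpairm).aestronglyMeasurable)
    have e1 : integral μ ((f ∘ Z) * (g ∘ fun ω => (S_T ω, S_C ω, Y_C ω)))
        = ∫ ω in A ∩ B, Y_C ω ∂μ := by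
      rw [← integral_indicator (hmA.inter hmB)]
      apply integral_congr_ae (Filter.Eventually.of_forall fun ω => ?_)
      by_cases h1 : Z ω = false <;> by_cases h2 : S_C ω = true <;>
        simp [f, g, A, B, Set.indicator_apply, h1, h2]
    have e2 : integral μ (f ∘ Z) = p := by
      have : (f ∘ Z) = A.indicator (fun _ => (1 : ℝ)) := by
        ext ω; by_cases h : Z ω = false <;> simp [f, A, Set.indicator_apply, h]
      rw [this, integral_indicator_const _ hmA, smul_eq_mul, mul_one, Measure.real]
    have e3 : integral μ (g ∘ fun ω => (S_T ω, S_C ω, Y_C ω)) = ∫ ω in B, Y_C ω ∂μ := by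
      rw [← integral_indicator hmB]
      apply integral_congr_ae (Filter.Eventually.of_forall fun ω => ?_)
      by_cases h2 : S_C ω = true <;> simp [g, B, Set.indicator_apply, h2]
    rw [e1, e2, e3] at hmul
    exact hmul
  -- outcome equals Y_C on the conditioning event
  have hobs : ∫ ω in A ∩ B, (if Z ω then Y_T ω else Y_C ω) ∂μ = ∫ ω in A ∩ B, Y_C ω ∂μ := by
    apply setIntegral_congr_fun (hmA.inter hmB)
    rintro ω ⟨h1, _⟩
    have : Z ω = false := h1
    simp [this]
  -- strata integrals sum
  have hsum : (∫ ω in LL, Y_C ω ∂μ) + (∫ ω in DL, Y_C ω ∂μ) = ∫ ω in B, Y_C ω ∂μ := by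
    rw [← hunion, setIntegral_union hdisj hmDL hint.integrableOn hint.integrableOn]
  -- conditional strata terms
  have hterm : ∀ s : Set Ω, (μ s).toReal * ∫ ω, Y_C ω ∂μ[|s] = ∫ ω in s, Y_C ω ∂μ := by
    intro s
    rw [cond_integral_eq]
    by_cases h0 : μ s = 0
    · simp [h0, Measure.restrict_eq_zero.mpr h0]
    · have : (μ s).toReal ≠ 0 := ENNReal.toReal_ne_zero.mpr ⟨h0, hfin _⟩
      field_simp
  -- put everything together
  rw [hsE, cond_integral_eq, hobs, hintAB, hmeasAB, ENNReal.toReal_mul,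
    hterm LL, hterm DL, hsum, hq_ab.symm, ← hp_def, ← hq_def]
  rw [mul_comm p q, mul_inv, mul_assoc, inv_mul_cancel_left₀ hApos.ne', div_eq_inv_mul]
end

section
/- The naive comparison of observed survivor means can have the opposite sign of the survivor average causal effect: there exists a probability space with treatment assignment Z : Ω → Bool satisfying P(Z = T) = 1/2, potential survival outcomes S_T, S_C and potential outcomes Y_T, Y_C with Z independent of (S_T, S_C, Y_T, Y_C), such that the principal strata have probabilities P(LL) = 0.2, P(LD) = 0.4, P(DL) = 0.2, P(DD) = 0.2, the survivor average causal effect E[Y_T − Y_C | LL] = 200 > 0 and the causal effect on survival P(S_T = L) − P(S_C = L) = 0.2 > 0, yet the naive survivor contrast E[Y^obs | Z = T, S^obs = L] − E[Y^obs | Z = C, S^obs = L] = 700 − 750 = −50 < 0. -/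
open MeasureTheory ProbabilityTheory

namespace NaiveSurvivor

abbrev Om : Type := Bool × Fin 5

noncomputable def μ1 : Measure Bool := (PMF.uniformOfFintype Bool).toMeasure
noncomputable def μ2 : Measure (Fin 5) := (PMF.uniformOfFintype (Fin 5)).toMeasure

instance : IsProbabilityMeasure μ1 := PMF.toMeasure.isProbabilityMeasure _
instance : IsProbabilityMeasure μ2 := PMF.toMeasure.isProbabilityMeasure _

noncomputable def μ : Measure Om := μ1.prod μ2

instance : IsProbabilityMeasure μ := by unfold μ; infer_instance

lemma μ1_singleton (a : Bool) : μ1 {a} = 1/2 := by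
  rw [μ1, PMF.toMeasure_apply_singleton _ _ (measurableSet_singleton a)]
  simp [PMF.uniformOfFintype_apply]

lemma μ2_singleton (b : Fin 5) : μ2 {b} = 1/5 := by
  rw [μ2, PMF.toMeasure_apply_singleton _ _ (measurableSet_singleton b)]
  simp [PMF.uniformOfFintype_apply]

lemma μ_singleton (x : Om) : μ {x} = 1/10 := by
  obtain ⟨a, b⟩ := x
  have h : ({(a, b)} : Set Om) = {a} ×ˢ {b} := by
    ext ⟨u, v⟩; simp [Prod.ext_iff]
  rw [h, μ, Measure.prod_prod, μ1_singleton, μ2_singleton,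
    one_div, one_div, one_div, ← ENNReal.mul_inv (by norm_num) (by norm_num)]
  norm_num

lemma μ_apply (s : Set Om) : μ s = ∑ x : Om, s.indicator (fun _ => (1/10 : ENNReal)) x := by
  have hs : s = ⋃ x ∈ (Finset.univ : Finset Om), s ∩ {x} := by
    ext y; simp
  conv_lhs => rw [hs]
  rw [measure_biUnion_finset ?_ (fun _ _ => .of_discrete)]
  · refine Finset.sum_congr rfl fun x _ => ?_
    by_cases hx : x ∈ s
    · rw [Set.indicator_of_mem hx, Set.inter_eq_self_of_subset_right (by simpa using hx),
        μ_singleton]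
    · rw [Set.indicator_of_notMem hx, Set.inter_singleton_eq_empty.2 hx, measure_empty]
  · intro x _ y _ hxy
    refine Set.disjoint_left.2 fun z hz hz' => hxy ?_
    rcases hz with ⟨_, h1⟩
    rcases hz' with ⟨_, h2⟩
    rw [← h1, ← h2]

lemma cond_integral (s : Set Om) (f : Om → ℝ) (hs : μ s ≠ 0) :
    ∫ ω, f ω ∂μ[|s] = ∑ x : Om, ((μ s)⁻¹ * μ (s ∩ {x})).toReal * f x := by
  have : IsProbabilityMeasure (μ[|s]) := cond_isProbabilityMeasure hs
  rw [integral_fintype Integrable.of_finite]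
  refine Finset.sum_congr rfl fun x _ => ?_
  rw [Measure.real_def, ProbabilityTheory.cond_apply .of_discrete, smul_eq_mul]



lemma μ_inter_singleton (s : Set Om) (x : Om) [Decidable (x ∈ s)] :
    μ (s ∩ {x}) = if x ∈ s then 1/10 else 0 := by
  by_cases hx : x ∈ s
  · rw [if_pos hx, Set.inter_eq_self_of_subset_right (by simpa using hx), μ_singleton]
  · rw [if_neg hx, Set.inter_singleton_eq_empty.2 hx, measure_empty]


lemma v3 : ((3:Fin 5):ℕ) = 3 := rfl
lemma v4 : ((4:Fin 5):ℕ) = 4 := rfl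
lemma v20 : ((2:Fin 5) = 0) = False := by decide

def Zf (ω : Om) : Bool := ω.1
def sT (ω : Om) : Bool := decide (ω.2.val ≤ 2)
def sC (ω : Om) : Bool := decide (ω.2.val = 0 ∨ ω.2.val = 3)
noncomputable def yT (ω : Om) : ℝ := if ω.2.val = 0 then 1000 else if ω.2.val ≤ 2 then 550 else 0
noncomputable def yC (ω : Om) : ℝ := if ω.2.val = 0 then 800 else if ω.2.val = 3 then 700 else 0

lemma mZ : μ {ω | Zf ω = true} = 1/2 := by
  rw [μ_apply]
  simp [Fintype.sum_prod_type, Fin.sum_univ_five, Set.indicator_apply, Zf, -one_div]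
  simp only [mul_one_div, ENNReal.div_add_div_same]
  rw [ENNReal.div_eq_div_iff] <;> norm_num

lemma mLL : μ {ω | sT ω = true ∧ sC ω = true} = 1/5 := by
  rw [μ_apply]
  simp [Fintype.sum_prod_type, Fin.sum_univ_five, Set.indicator_apply, sT, sC, v3, v4, -one_div]
  simp only [mul_one_div, ENNReal.div_add_div_same]
  rw [ENNReal.div_eq_div_iff] <;> norm_num

lemma mLD : μ {ω | sT ω = true ∧ sC ω = false} = 2/5 := by
  rw [μ_apply]
  simp [Fintype.sum_prod_type, Fin.sum_univ_five, Set.indicator_apply, sT, sC, v3, v4, -one_div]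
  simp only [mul_one_div, ENNReal.div_add_div_same]
  rw [ENNReal.div_eq_div_iff] <;> norm_num

lemma mDL : μ {ω | sT ω = false ∧ sC ω = true} = 1/5 := by
  rw [μ_apply]
  simp [Fintype.sum_prod_type, Fin.sum_univ_five, Set.indicator_apply, sT, sC, v3, v4, -one_div]
  simp only [mul_one_div, ENNReal.div_add_div_same]
  rw [ENNReal.div_eq_div_iff] <;> norm_num

lemma mDD : μ {ω | sT ω = false ∧ sC ω = false} = 1/5 := by
  rw [μ_apply]
  simp [Fintype.sum_prod_type, Fin.sum_univ_five, Set.indicator_apply, sT, sC, v3, v4, -one_div]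
  simp only [mul_one_div, ENNReal.div_add_div_same]
  rw [ENNReal.div_eq_div_iff] <;> norm_num

lemma mST : μ {ω | sT ω = true} = 3/5 := by
  rw [μ_apply]
  simp [Fintype.sum_prod_type, Fin.sum_univ_five, Set.indicator_apply, sT, v3, v4, -one_div]
  simp only [mul_one_div, ENNReal.div_add_div_same]
  rw [ENNReal.div_eq_div_iff] <;> norm_num

lemma mSC : μ {ω | sC ω = true} = 2/5 := by
  rw [μ_apply]
  simp [Fintype.sum_prod_type, Fin.sum_univ_five, Set.indicator_apply, sC, v3, v4, -one_div]
  simp only [mul_one_div, ENNReal.div_add_div_same]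
  rw [ENNReal.div_eq_div_iff] <;> norm_num

lemma mT : μ {ω | Zf ω = true ∧ (if Zf ω then sT ω else sC ω) = true} = 3/10 := by
  rw [μ_apply]
  simp [Fintype.sum_prod_type, Fin.sum_univ_five, Set.indicator_apply, Zf, sT, sC, v3, v4, -one_div]
  simp only [mul_one_div, ENNReal.div_add_div_same]
  rw [ENNReal.div_eq_div_iff] <;> norm_num

lemma mC : μ {ω | Zf ω = false ∧ (if Zf ω then sT ω else sC ω) = true} = 1/5 := by
  rw [μ_apply]
  simp [Fintype.sum_prod_type, Fin.sum_univ_five, Set.indicator_apply, Zf, sT, sC, v3, v4, -one_div]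
  simp only [mul_one_div, ENNReal.div_add_div_same]
  rw [ENNReal.div_eq_div_iff] <;> norm_num

lemma iSACE : (∫ ω, (yT ω - yC ω) ∂μ[|{ω | sT ω = true ∧ sC ω = true}]) = 200 := by
  rw [cond_integral _ _ (by rw [mLL]; norm_num), mLL]
  simp only [Fintype.sum_prod_type, Fin.sum_univ_five, Fintype.sum_bool, μ_inter_singleton]
  norm_num [sT, sC, yT, yC, v3, v4, v20, Set.mem_setOf_eq, ENNReal.toReal_mul, ENNReal.toReal_inv,
    ENNReal.toReal_div]

lemma iT : (∫ ω, (if Zf ω then yT ω else yC ω)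
    ∂μ[|{ω | Zf ω = true ∧ (if Zf ω then sT ω else sC ω) = true}]) = 700 := by
  rw [cond_integral _ _ (by rw [mT]; norm_num), mT]
  simp only [Fintype.sum_prod_type, Fin.sum_univ_five, Fintype.sum_bool, μ_inter_singleton]
  norm_num [Zf, sT, sC, yT, yC, v3, v4, Set.mem_setOf_eq, ENNReal.toReal_mul, ENNReal.toReal_inv,
    ENNReal.toReal_div]

lemma iC : (∫ ω, (if Zf ω then yT ω else yC ω)
    ∂μ[|{ω | Zf ω = false ∧ (if Zf ω then sT ω else sC ω) = true}]) = 750 := by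
  rw [cond_integral _ _ (by rw [mC]; norm_num), mC]
  simp only [Fintype.sum_prod_type, Fin.sum_univ_five, Fintype.sum_bool, μ_inter_singleton]
  norm_num [Zf, sT, sC, yT, yC, v3, v4, Set.mem_setOf_eq, ENNReal.toReal_mul, ENNReal.toReal_inv,
    ENNReal.toReal_div]

lemma indep : IndepFun Zf (fun ω => (sT ω, sC ω, yT ω, yC ω)) μ := by
  have base : IndepFun (Prod.fst : Om → Bool) (Prod.snd : Om → Fin 5) μ := by
    rw [indepFun_iff_measure_inter_preimage_eq_mul]
    intro s t _ _
    have h1 : (Prod.fst ⁻¹' s ∩ Prod.snd ⁻¹' t : Set Om) = s ×ˢ t := rfl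
    have h2 : (Prod.fst ⁻¹' s : Set Om) = s ×ˢ Set.univ := by ext ⟨a, b⟩; simp
    have h3 : (Prod.snd ⁻¹' t : Set Om) = Set.univ ×ˢ t := by ext ⟨a, b⟩; simp
    rw [h1, h2, h3, μ, Measure.prod_prod, Measure.prod_prod, Measure.prod_prod,
      measure_univ, measure_univ, mul_one, one_mul]
  exact base.comp (measurable_id : Measurable (id : Bool → Bool))
    (Measurable.of_discrete
      (f := fun i : Fin 5 => ((decide (i.val ≤ 2) : Bool),
        (decide (i.val = 0 ∨ i.val = 3) : Bool),
        (if i.val = 0 then (1000:ℝ) else if i.val ≤ 2 then 550 else 0),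
        (if i.val = 0 then (800:ℝ) else if i.val = 3 then 700 else 0))))

end NaiveSurvivor

open NaiveSurvivor in
/-- The naive comparison of observed survivor means can have the opposite sign of the
survivor average causal effect: there is a randomized experiment with
`P(LL) = 0.2`, `P(LD) = 0.4`, `P(DL) = 0.2`, `P(DD) = 0.2`, survivor average causal effect
`E[Y_T − Y_C | LL] = 200 > 0`, causal effect on survival
`P(S_T = L) − P(S_C = L) = 0.2 > 0`, yet the naive survivor contrast is
`E[Y^obs | Z = T, S^obs = L] − E[Y^obs | Z = C, S^obs = L] = 700 − 750 = −50 < 0`. -/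
theorem naive_survivor_contrast_can_reverse_sign :
    ∃ (Ω : Type) (_ : MeasurableSpace Ω) (μ : Measure Ω)
      (Z S_T S_C : Ω → Bool) (Y_T Y_C : Ω → ℝ),
      IsProbabilityMeasure μ ∧
      Measurable Z ∧ Measurable S_T ∧ Measurable S_C ∧
      Measurable Y_T ∧ Measurable Y_C ∧
      Integrable Y_T μ ∧ Integrable Y_C μ ∧
      μ {ω | Z ω = true} = 1/2 ∧
      IndepFun Z (fun ω => (S_T ω, S_C ω, Y_T ω, Y_C ω)) μ ∧
      μ {ω | S_T ω = true ∧ S_C ω = true} = 1/5 ∧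
      μ {ω | S_T ω = true ∧ S_C ω = false} = 2/5 ∧
      μ {ω | S_T ω = false ∧ S_C ω = true} = 1/5 ∧
      μ {ω | S_T ω = false ∧ S_C ω = false} = 1/5 ∧
      (∫ ω, (Y_T ω - Y_C ω) ∂μ[|{ω | S_T ω = true ∧ S_C ω = true}]) = 200 ∧
      (0 : ℝ) < 200 ∧
      (μ {ω | S_T ω = true}).toReal - (μ {ω | S_C ω = true}).toReal = 1/5 ∧
      (0 : ℝ) < 1/5 ∧
      (∫ ω, (if Z ω then Y_T ω else Y_C ω)
          ∂μ[|{ω | Z ω = true ∧ (if Z ω then S_T ω else S_C ω) = true}]) = 700 ∧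
      (∫ ω, (if Z ω then Y_T ω else Y_C ω)
          ∂μ[|{ω | Z ω = false ∧ (if Z ω then S_T ω else S_C ω) = true}]) = 750 ∧
      (∫ ω, (if Z ω then Y_T ω else Y_C ω)
          ∂μ[|{ω | Z ω = true ∧ (if Z ω then S_T ω else S_C ω) = true}])
        - (∫ ω, (if Z ω then Y_T ω else Y_C ω)
          ∂μ[|{ω | Z ω = false ∧ (if Z ω then S_T ω else S_C ω) = true}]) = -50 ∧
      ((-50 : ℝ) < 0) := by
  refine ⟨Om, inferInstance, μ, Zf, sT, sC, yT, yC,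
    inferInstance,
    Measurable.of_discrete, Measurable.of_discrete, Measurable.of_discrete,
    Measurable.of_discrete, Measurable.of_discrete,
    Integrable.of_finite, Integrable.of_finite,
    mZ, indep, mLL, mLD, mDL, mDD, iSACE, by norm_num,
    ?_, by norm_num, iT, iC, by rw [iT, iC]; norm_num, by norm_num⟩
  rw [mST, mSC]
  rw [ENNReal.toReal_div, ENNReal.toReal_div]
  norm_num
end

section
/- Under monotonicity, the control arm of a randomized experiment identifies both the size of the LL stratum and its mean control outcome: if P(Z = T) < 1, Z is independent of (S_T, S_C, Y_C), Y_C is integrable, P(DL) = 0, and P(LL) > 0, then P(LL) = P(S^obs = L | Z = C) and E[Y_C | LL] = E[Y^obs | Z = C, S^obs = L]. -/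
open MeasureTheory ProbabilityTheory

/-- Under monotonicity (no defiers, `P(DL) = 0`), the control arm identifies both the size
of the `LL` stratum and its mean control outcome:
`P(LL) = P(S^obs = L | Z = C)` and `E[Y_C | LL] = E[Y^obs | Z = C, S^obs = L]`. -/
theorem monotonicity_control_arm_identifies_LL
    {Ω : Type*} [MeasurableSpace Ω] (μ : Measure Ω) [IsProbabilityMeasure μ]
    (Z S_T S_C : Ω → Bool) (Y_T Y_C : Ω → ℝ)
    (hZ : Measurable Z) (hST : Measurable S_T) (hSC : Measurable S_C)
    (hYT : Measurable Y_T) (hYC : Measurable Y_C)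
    (hlt : μ {ω | Z ω = true} < 1)
    (hindep : IndepFun Z (fun ω => (S_T ω, S_C ω, Y_C ω)) μ)
    (hint : Integrable Y_C μ)
    (hmono : μ {ω | S_T ω = false ∧ S_C ω = true} = 0)
    (hLL : 0 < μ {ω | S_T ω = true ∧ S_C ω = true}) :
    μ {ω | S_T ω = true ∧ S_C ω = true} =
        μ[|{ω | Z ω = false}] {ω | (if Z ω then S_T ω else S_C ω) = true} ∧
    (∫ ω, Y_C ω ∂μ[|{ω | S_T ω = true ∧ S_C ω = true}]) =
        ∫ ω, (if Z ω then Y_T ω else Y_C ω)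
          ∂μ[|{ω | Z ω = false ∧ (if Z ω then S_T ω else S_C ω) = true}] := by
  set W : Ω → Bool × Bool × ℝ := fun ω => (S_T ω, S_C ω, Y_C ω) with hW
  have hWm : Measurable W := hST.prodMk (hSC.prodMk hYC)
  set A : Set Ω := {ω | Z ω = false} with hA
  set B : Set Ω := {ω | S_C ω = true} with hB
  set LL : Set Ω := {ω | S_T ω = true ∧ S_C ω = true} with hLLdef
  have hAm : MeasurableSet A := hZ (measurableSet_singleton false)
  have hBm : MeasurableSet B := hSC (measurableSet_singleton true)
  have hLLm : MeasurableSet LL :=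
    (hST (measurableSet_singleton true)).inter (hSC (measurableSet_singleton true))
  -- A has positive measure
  have hAc : A = {ω | Z ω = true}ᶜ := by
    ext ω; simp [hA, Bool.not_eq_true]
  have hTm : MeasurableSet {ω | Z ω = true} := by exact hZ (measurableSet_singleton true)
  have hμA : μ A = 1 - μ {ω | Z ω = true} := by
    rw [hAc, measure_compl hTm (measure_ne_top μ _), measure_univ]
  have hApos : 0 < μ A := by
    rw [hμA]; exact tsub_pos_of_lt hlt
  have hAne : μ A ≠ 0 := hApos.ne'
  have hAfin : μ A ≠ ⊤ := measure_ne_top μ A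
  -- B = LL up to null set
  have hBLLae : B =ᵐ[μ] LL := by
    rw [MeasureTheory.ae_eq_set]
    constructor
    · refine measure_mono_null ?_ hmono
      intro ω hω
      obtain ⟨h2, h3⟩ := hω
      simp only [hB, Set.mem_setOf_eq] at h2
      simp only [hLLdef, Set.mem_setOf_eq] at h3
      refine ⟨?_, h2⟩
      cases hst : S_T ω with
      | false => rfl
      | true => exact absurd ⟨hst, h2⟩ h3
    · refine measure_mono_null ?_ (measure_empty (μ := μ))
      intro ω hω; exact absurd hω.1.2 hω.2
  have hBLL : μ B = μ LL := measure_congr hBLLae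
  -- independence of events
  have hAB : μ (A ∩ B) = μ A * μ B := by
    have := hindep.measure_inter_preimage_eq_mul {false}
      {p : Bool × Bool × ℝ | p.2.1 = true}
      (measurableSet_singleton false)
      (by exact (measurable_fst.comp measurable_snd) (measurableSet_singleton true))
    simpa [Set.preimage, hA, hB, hW] using this
  -- observed sets rewrite
  have hobs1 : A ∩ {ω | (if Z ω then S_T ω else S_C ω) = true} = A ∩ B := by
    ext ω
    cases hz : Z ω <;>
      simp [hA, hB, Set.mem_inter_iff, Set.mem_setOf_eq, hz, and_comm]
  have hobs2 : {ω | Z ω = false ∧ (if Z ω then S_T ω else S_C ω) = true} = A ∩ B := by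
    ext ω
    cases hz : Z ω <;>
      simp [hA, hB, Set.mem_inter_iff, Set.mem_setOf_eq, hz]
  constructor
  · -- part 1
    rw [cond_apply hAm, hobs1, hAB, hBLL, ← mul_assoc, ENNReal.inv_mul_cancel hAne hAfin,
      one_mul]
  · -- part 2
    have hABm : MeasurableSet (A ∩ B) := hAm.inter hBm
    have hμAB : μ (A ∩ B) = μ A * μ LL := by rw [hAB, hBLL]
    -- integrals
    have hobsint : ∀ ω ∈ A ∩ B, (if Z ω then Y_T ω else Y_C ω) = Y_C ω := by
      intro ω hω
      have h1 : Z ω = false := hω.1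
      simp [h1]
    -- independence for integrals
    have hindep2 : IndepFun (fun ω => Set.indicator A (fun _ => (1:ℝ)) ω)
        (fun ω => Set.indicator B Y_C ω) μ := by
      have hg : Measurable (fun b : Bool => if b = false then (1:ℝ) else 0) :=
        measurable_of_countable _
      have hh : Measurable (fun p : Bool × Bool × ℝ => if p.2.1 = true then p.2.2 else 0) := by
        apply Measurable.ite
        · exact (measurable_fst.comp measurable_snd) (measurableSet_singleton true)
        · exact measurable_snd.comp measurable_snd
        · exact measurable_const
      have e1 : (fun ω => Set.indicator A (fun _ => (1:ℝ)) ω)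
          = (fun b : Bool => if b = false then (1:ℝ) else 0) ∘ Z := by
        funext ω
        cases hz : Z ω <;>
          simp [Set.indicator_apply, hA, Set.mem_setOf_eq, hz, Function.comp]
      have e2 : (fun ω => Set.indicator B Y_C ω)
          = (fun p : Bool × Bool × ℝ => if p.2.1 = true then p.2.2 else 0) ∘ W := by
        funext ω
        cases hs : S_C ω <;>
          simp [Set.indicator_apply, hB, Set.mem_setOf_eq, hs, Function.comp, hW]
      rw [e1, e2]
      exact hindep.comp hg hh
    have hint1 : Integrable (fun ω => Set.indicator A (fun _ => (1:ℝ)) ω) μ :=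
      (integrable_const (1:ℝ)).indicator hAm
    have hint2 : Integrable (fun ω => Set.indicator B Y_C ω) μ := hint.indicator hBm
    have hmul := hindep2.integral_mul_eq_mul_integral hint1.aestronglyMeasurable hint2.aestronglyMeasurable
    have hprod : ((fun ω => Set.indicator A (fun _ => (1:ℝ)) ω) * (fun ω => Set.indicator B Y_C ω))
        = Set.indicator (A ∩ B) Y_C := by
      funext ω
      by_cases h1 : ω ∈ A <;> by_cases h2 : ω ∈ B <;>
        simp [Set.indicator_apply, h1, h2, Set.mem_inter_iff]
    rw [hprod] at hmul
    rw [integral_indicator hABm, integral_indicator hBm, integral_indicator hAm] at hmul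
    have hintA : ∫ ω in A, (1:ℝ) ∂μ = (μ A).toReal := by
      simp [Measure.restrict_apply_univ, Measure.real]
    rw [hintA] at hmul
    have hintB : ∫ ω in B, Y_C ω ∂μ = ∫ ω in LL, Y_C ω ∂μ :=
      setIntegral_congr_set hBLLae
    -- now compute both sides
    rw [hobs2]
    rw [ProbabilityTheory.cond, ProbabilityTheory.cond]
    rw [integral_smul_measure, integral_smul_measure]
    rw [setIntegral_congr_fun hABm hobsint]
    rw [hmul, hintB, hμAB]
    have hLLfin : μ LL ≠ ⊤ := measure_ne_top μ LL
    have hAt : (μ A).toReal ≠ 0 := by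
      simp [ENNReal.toReal_ne_zero, hAne, hAfin]
    rw [ENNReal.toReal_inv, ENNReal.toReal_inv, ENNReal.toReal_mul]
    field_simp
    rw [smul_eq_mul, smul_eq_mul, div_mul_eq_mul_div, one_mul, div_mul_eq_mul_div, one_mul,
      mul_comm ((μ LL).toReal), mul_div_mul_left _ _ hAt]
end

section
/- Under monotonicity and exclusion, the instrumental variables estimand with outcomes imputed as zero for the dead equals the mean treated outcome in the LD stratum (not a causal effect on a common set of units): if 0 < P(Z = T) < 1, Z is independent of (S_T, S_C, Y_T, Y_C), Y_T and Y_C are integrable, P(DL) = 0 (monotonicity), Y_T = Y_C almost surely on LL (exclusion), and P(LD) > 0, then (E[Y^obs·1{S^obs = L} | Z = T] − E[Y^obs·1{S^obs = L} | Z = C]) / (P(S^obs = L | Z = T) − P(S^obs = L | Z = C)) = E[Y_T | LD]. -/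
open MeasureTheory ProbabilityTheory

lemma indep_setIntegral {Ω β : Type*} [MeasurableSpace Ω] [MeasurableSpace β]
    (μ : Measure Ω) [IsProbabilityMeasure μ] (Z : Ω → Bool) (W : Ω → β)
    (hZ : Measurable Z) (hW : Measurable W) (hindep : IndepFun Z W μ) (c : Bool)
    (φ : β → ℝ) (hφ : Measurable φ) :
    ∫ ω in {ω | Z ω = c}, φ (W ω) ∂μ = (μ {ω | Z ω = c}).toReal * ∫ ω, φ (W ω) ∂μ := by
  have hA : MeasurableSet {ω | Z ω = c} := hZ (measurableSet_singleton c)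
  have h1 : IndepFun (fun ω => if Z ω = c then (1:ℝ) else 0) (fun ω => φ (W ω)) μ :=
    hindep.comp (Measurable.of_discrete (f := fun b : Bool => if b = c then (1:ℝ) else 0)) hφ
  have hXm : AEStronglyMeasurable (fun ω => if Z ω = c then (1:ℝ) else 0) μ :=
    (((Measurable.of_discrete (f := fun b : Bool => if b = c then (1:ℝ) else 0)).comp
      hZ)).aestronglyMeasurable
  have h2 := h1.integral_mul_eq_mul_integral hXm ((hφ.comp hW).aestronglyMeasurable)
  have e1 : (fun ω => if Z ω = c then (1:ℝ) else 0) * (fun ω => φ (W ω))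
      = Set.indicator {ω | Z ω = c} (fun ω => φ (W ω)) := by
    funext ω; by_cases h : Z ω = c <;> simp [Set.indicator_apply, h]
  have e2 : ∫ ω, (if Z ω = c then (1:ℝ) else 0) ∂μ = (μ {ω | Z ω = c}).toReal := by
    have : (fun ω => if Z ω = c then (1:ℝ) else 0)
        = Set.indicator {ω | Z ω = c} (fun _ => (1:ℝ)) := by
      funext ω; by_cases h : Z ω = c <;> simp [Set.indicator_apply, h]
    rw [this, integral_indicator hA, setIntegral_const, smul_eq_mul, mul_one, measureReal_def]
  rw [e1, integral_indicator hA, e2] at h2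
  exact h2

/-- Under monotonicity (`P(DL) = 0`) and exclusion (`Y_T = Y_C` a.s. on `LL`), the
instrumental variables estimand, with outcomes imputed as zero for the dead, equals the
mean treated outcome in the `LD` stratum:
`(E[Y^obs·1{S^obs=L} | Z=T] − E[Y^obs·1{S^obs=L} | Z=C]) /
  (P(S^obs=L | Z=T) − P(S^obs=L | Z=C)) = E[Y_T | LD]`. -/
theorem iv_estimand_equals_LD_treated_mean
    {Ω : Type*} [MeasurableSpace Ω] (μ : Measure Ω) [IsProbabilityMeasure μ]
    (Z S_T S_C : Ω → Bool) (Y_T Y_C : Ω → ℝ)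
    (hZ : Measurable Z) (hST : Measurable S_T) (hSC : Measurable S_C)
    (hYT : Measurable Y_T) (hYC : Measurable Y_C)
    (hpos : 0 < μ {ω | Z ω = true}) (hlt : μ {ω | Z ω = true} < 1)
    (hindep : IndepFun Z (fun ω => (S_T ω, S_C ω, Y_T ω, Y_C ω)) μ)
    (hintT : Integrable Y_T μ) (hintC : Integrable Y_C μ)
    (hmono : μ {ω | S_T ω = false ∧ S_C ω = true} = 0)
    (hexcl : ∀ᵐ ω ∂μ, S_T ω = true → S_C ω = true → Y_T ω = Y_C ω)
    (hLD : 0 < μ {ω | S_T ω = true ∧ S_C ω = false}) :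
    ((∫ ω, (if (if Z ω then S_T ω else S_C ω) then (if Z ω then Y_T ω else Y_C ω) else 0)
          ∂μ[|{ω | Z ω = true}])
      - (∫ ω, (if (if Z ω then S_T ω else S_C ω) then (if Z ω then Y_T ω else Y_C ω) else 0)
          ∂μ[|{ω | Z ω = false}]))
    / ((μ[|{ω | Z ω = true}] {ω | (if Z ω then S_T ω else S_C ω) = true}).toReal
      - (μ[|{ω | Z ω = false}] {ω | (if Z ω then S_T ω else S_C ω) = true}).toReal)
    = ∫ ω, Y_T ω ∂μ[|{ω | S_T ω = true ∧ S_C ω = false}] := by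
  classical
  set W : Ω → Bool × Bool × ℝ × ℝ := fun ω => (S_T ω, S_C ω, Y_T ω, Y_C ω) with hWdef
  have hW : Measurable W := hST.prodMk (hSC.prodMk (hYT.prodMk hYC))
  -- basic sets
  set A : Set Ω := {ω | Z ω = true} with hAdef
  set B : Set Ω := {ω | Z ω = false} with hBdef
  have hAmeas : MeasurableSet A := hZ (measurableSet_singleton true)
  have hBmeas : MeasurableSet B := hZ (measurableSet_singleton false)
  have hBcompl : B = Aᶜ := by
    ext ω; simp [hAdef, hBdef]
  have haT : μ A ≠ ⊤ := measure_ne_top μ A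
  have haReal_pos : 0 < (μ A).toReal := ENNReal.toReal_pos hpos.ne' haT
  have hBpos : 0 < μ B := by
    rw [hBcompl, prob_compl_eq_one_sub hAmeas]
    exact tsub_pos_of_lt hlt
  have hbReal_pos : 0 < (μ B).toReal := ENNReal.toReal_pos hBpos.ne' (measure_ne_top μ B)
  -- the functions φT, φC
  set φT : Bool × Bool × ℝ × ℝ → ℝ := fun p => if p.1 then p.2.2.1 else 0 with hφTdef
  set φC : Bool × Bool × ℝ × ℝ → ℝ := fun p => if p.2.1 then p.2.2.2 else 0 with hφCdef
  have hφT : Measurable φT := by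
    apply Measurable.ite (measurable_fst (measurableSet_singleton true))
    · exact measurable_fst.comp (measurable_snd.comp measurable_snd)
    · exact measurable_const
  have hφC : Measurable φC := by
    apply Measurable.ite ((measurable_fst.comp measurable_snd) (measurableSet_singleton true))
    · exact measurable_snd.comp (measurable_snd.comp measurable_snd)
    · exact measurable_const
  -- the integrand restricted to A / B
  have hIA : ∫ ω, (if (if Z ω then S_T ω else S_C ω) then (if Z ω then Y_T ω else Y_C ω) else 0)
        ∂μ[|A] = ∫ ω, φT (W ω) ∂μ := by
    rw [cond_integral_eq]
    have : ∫ ω in A, (if (if Z ω then S_T ω else S_C ω) then (if Z ω then Y_T ω else Y_C ω)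
        else 0) ∂μ = ∫ ω in A, φT (W ω) ∂μ := by
      apply setIntegral_congr_fun hAmeas
      intro ω hω
      have : Z ω = true := hω
      simp [this, hφTdef, hWdef]
    rw [this, indep_setIntegral μ Z W hZ hW hindep true φT hφT, ← hAdef, ← mul_assoc,
      inv_mul_cancel₀ haReal_pos.ne', one_mul]
  have hIB : ∫ ω, (if (if Z ω then S_T ω else S_C ω) then (if Z ω then Y_T ω else Y_C ω) else 0)
        ∂μ[|B] = ∫ ω, φC (W ω) ∂μ := by
    rw [cond_integral_eq]
    have : ∫ ω in B, (if (if Z ω then S_T ω else S_C ω) then (if Z ω then Y_T ω else Y_C ω)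
        else 0) ∂μ = ∫ ω in B, φC (W ω) ∂μ := by
      apply setIntegral_congr_fun hBmeas
      intro ω hω
      have : Z ω = false := hω
      simp [this, hφCdef, hWdef]
    rw [this, indep_setIntegral μ Z W hZ hW hindep false φC hφC, ← hBdef, ← mul_assoc,
      inv_mul_cancel₀ hbReal_pos.ne', one_mul]
  -- conditional probabilities
  have hPA : μ[|A] {ω | (if Z ω then S_T ω else S_C ω) = true} = μ {ω | S_T ω = true} := by
    rw [cond_apply hAmeas]
    have hset : A ∩ {ω | (if Z ω then S_T ω else S_C ω) = true} = A ∩ {ω | S_T ω = true} := by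
      ext ω
      simp only [Set.mem_inter_iff, Set.mem_setOf_eq, hAdef]
      constructor
      · rintro ⟨h1, h2⟩; rw [h1] at h2; simp at h2; exact ⟨h1, h2⟩
      · rintro ⟨h1, h2⟩; exact ⟨h1, by simp [h1, h2]⟩
    rw [hset]
    have := hindep.measure_inter_preimage_eq_mul {true} {p : Bool × Bool × ℝ × ℝ | p.1 = true}
      (measurableSet_singleton true) (measurable_fst (measurableSet_singleton true))
    have hZpre : Z ⁻¹' {true} = A := rfl
    have hWpre : (fun ω => (S_T ω, S_C ω, Y_T ω, Y_C ω)) ⁻¹'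
        {p : Bool × Bool × ℝ × ℝ | p.1 = true} = {ω | S_T ω = true} := rfl
    rw [hZpre, hWpre] at this
    rw [this, ← mul_assoc, ENNReal.inv_mul_cancel hpos.ne' haT, one_mul]
  have hPB : μ[|B] {ω | (if Z ω then S_T ω else S_C ω) = true} = μ {ω | S_C ω = true} := by
    rw [cond_apply hBmeas]
    have hset : B ∩ {ω | (if Z ω then S_T ω else S_C ω) = true} = B ∩ {ω | S_C ω = true} := by
      ext ω
      simp only [Set.mem_inter_iff, Set.mem_setOf_eq, hBdef]
      constructor
      · rintro ⟨h1, h2⟩; rw [h1] at h2; simp at h2; exact ⟨h1, h2⟩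
      · rintro ⟨h1, h2⟩; exact ⟨h1, by simp [h1, h2]⟩
    rw [hset]
    have := hindep.measure_inter_preimage_eq_mul {false} {p : Bool × Bool × ℝ × ℝ | p.2.1 = true}
      (measurableSet_singleton false)
      ((measurable_fst.comp measurable_snd) (measurableSet_singleton true))
    have hZpre : Z ⁻¹' {false} = B := rfl
    have hWpre : (fun ω => (S_T ω, S_C ω, Y_T ω, Y_C ω)) ⁻¹'
        {p : Bool × Bool × ℝ × ℝ | p.2.1 = true} = {ω | S_C ω = true} := rfl
    rw [hZpre, hWpre] at this
    rw [this, ← mul_assoc, ENNReal.inv_mul_cancel hBpos.ne' (measure_ne_top μ B), one_mul]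
  -- strata
  set LL : Set Ω := {ω | S_T ω = true ∧ S_C ω = true} with hLLdef
  set LD : Set Ω := {ω | S_T ω = true ∧ S_C ω = false} with hLDdef
  set DL : Set Ω := {ω | S_T ω = false ∧ S_C ω = true} with hDLdef
  have hLLmeas : MeasurableSet LL :=
    (hST (measurableSet_singleton true)).inter (hSC (measurableSet_singleton true))
  have hLDmeas : MeasurableSet LD :=
    (hST (measurableSet_singleton true)).inter (hSC (measurableSet_singleton false))
  have hDLmeas : MeasurableSet DL :=
    (hST (measurableSet_singleton false)).inter (hSC (measurableSet_singleton true))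
  have hST_split : {ω | S_T ω = true} = LL ∪ LD := by
    ext ω; simp only [Set.mem_setOf_eq, Set.mem_union, hLLdef, hLDdef]
    constructor
    · intro h; cases hc : S_C ω
      · exact Or.inr ⟨h, rfl⟩
      · exact Or.inl ⟨h, rfl⟩
    · rintro (⟨h, _⟩ | ⟨h, _⟩) <;> exact h
  have hSC_split : {ω | S_C ω = true} = LL ∪ DL := by
    ext ω; simp only [Set.mem_setOf_eq, Set.mem_union, hLLdef, hDLdef]
    constructor
    · intro h; cases ht : S_T ω
      · exact Or.inr ⟨rfl, h⟩
      · exact Or.inl ⟨rfl, h⟩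
    · rintro (⟨_, h⟩ | ⟨_, h⟩) <;> exact h
  have hdisj1 : Disjoint LL LD := by
    rw [Set.disjoint_left]; rintro ω ⟨_, h1⟩ ⟨_, h2⟩; rw [h1] at h2; exact Bool.noConfusion h2
  have hdisj2 : Disjoint LL DL := by
    rw [Set.disjoint_left]; rintro ω ⟨h1, _⟩ ⟨h2, _⟩; rw [h1] at h2; exact Bool.noConfusion h2
  have hmuST : μ {ω | S_T ω = true} = μ LL + μ LD := by
    rw [hST_split, measure_union hdisj1 hLDmeas]
  have hmuSC : μ {ω | S_C ω = true} = μ LL := by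
    rw [hSC_split, measure_union hdisj2 hDLmeas, hmono, add_zero]
  -- denominator
  have hden : (μ {ω | S_T ω = true}).toReal - (μ {ω | S_C ω = true}).toReal = (μ LD).toReal := by
    rw [hmuST, hmuSC, ENNReal.toReal_add (measure_ne_top μ LL) (measure_ne_top μ LD)]
    ring
  -- numerator
  have hintφT : Integrable (fun ω => φT (W ω)) μ := by
    have : (fun ω => φT (W ω)) = Set.indicator {ω | S_T ω = true} Y_T := by
      funext ω; by_cases h : S_T ω = true <;> simp [hφTdef, hWdef, Set.indicator_apply, h]
    rw [this]
    exact hintT.indicator (hST (measurableSet_singleton true))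
  have hintφC : Integrable (fun ω => φC (W ω)) μ := by
    have : (fun ω => φC (W ω)) = Set.indicator {ω | S_C ω = true} Y_C := by
      funext ω; by_cases h : S_C ω = true <;> simp [hφCdef, hWdef, Set.indicator_apply, h]
    rw [this]
    exact hintC.indicator (hSC (measurableSet_singleton true))
  have hmono' : ∀ᵐ ω ∂μ, ¬(S_T ω = false ∧ S_C ω = true) := by
    rw [ae_iff]; simpa using hmono
  have hae : (fun ω => φT (W ω) - φC (W ω)) =ᵐ[μ] Set.indicator LD Y_T := by
    filter_upwards [hexcl, hmono'] with ω h1 h2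
    have eT : φT (W ω) = if S_T ω then Y_T ω else 0 := rfl
    have eC : φC (W ω) = if S_C ω then Y_C ω else 0 := rfl
    rw [eT, eC, Set.indicator_apply]
    rcases (S_T ω).eq_false_or_eq_true with ht | ht <;>
      rcases (S_C ω).eq_false_or_eq_true with hc | hc
    · simp [hLDdef, ht, hc, h1 ht hc]
    · simp [hLDdef, ht, hc]
    · exact absurd ⟨ht, hc⟩ h2
    · simp [hLDdef, ht, hc]
  have hnum : (∫ ω, φT (W ω) ∂μ) - (∫ ω, φC (W ω) ∂μ) = ∫ ω in LD, Y_T ω ∂μ := by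
    rw [← integral_sub hintφT hintφC, integral_congr_ae hae, integral_indicator hLDmeas]
  -- put it together
  rw [hIA, hIB, hPA, hPB, hden, hnum, cond_integral_eq, div_eq_inv_mul]
end

section
/- A covariate that determines the principal stratum identifies the survivor average causal effect: let X : Ω → 𝒳 be a measurable covariate and A ⊆ 𝒳 a measurable set such that LL = {X ∈ A} (up to null sets). If 0 < P(Z = T) < 1, Z is independent of (X, S_T, S_C, Y_T, Y_C), Y_T and Y_C are integrable, and P(X ∈ A) > 0, then E[Y_T − Y_C | LL] = E[Y^obs | Z = T, X ∈ A] − E[Y^obs | Z = C, X ∈ A]. -/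
open MeasureTheory ProbabilityTheory

lemma aux_cond_integral_eq
    {Ω 𝒳 : Type*} [MeasurableSpace Ω] [MeasurableSpace 𝒳]
    (μ : Measure Ω) [IsProbabilityMeasure μ]
    (Z : Ω → Bool) (f : Ω → ℝ) (X : Ω → 𝒳) (A : Set 𝒳)
    (hZ : Measurable Z) (hfm : Measurable f) (hf : Integrable f μ) (hX : Measurable X) (hA : MeasurableSet A)
    (hind : IndepFun Z (fun ω => (X ω, f ω)) μ) (b : Bool)
    (hb : 0 < μ {ω | Z ω = b}) (hApos : 0 < μ {ω | X ω ∈ A}) :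
    ∫ ω, f ω ∂μ[|{ω | Z ω = b ∧ X ω ∈ A}] = ∫ ω, f ω ∂μ[|{ω | X ω ∈ A}] := by
  set W : Ω → 𝒳 × ℝ := fun ω => (X ω, f ω) with hW
  have hsets : {ω | Z ω = b ∧ X ω ∈ A} = Z ⁻¹' {b} ∩ W ⁻¹' (A ×ˢ Set.univ) := by
    ext ω; simp [hW]
  have hXA : W ⁻¹' (A ×ˢ Set.univ) = {ω | X ω ∈ A} := by
    ext ω; simp [hW]
  have hsm : MeasurableSet (Z ⁻¹' {b} ∩ W ⁻¹' (A ×ˢ Set.univ)) := by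
    rw [hXA]
    exact (hZ (measurableSet_singleton b)).inter (hX hA)
  have hμs : μ (Z ⁻¹' {b} ∩ W ⁻¹' (A ×ˢ Set.univ))
      = μ (Z ⁻¹' {b}) * μ (W ⁻¹' (A ×ˢ Set.univ)) :=
    hind.measure_inter_preimage_eq_mul _ _ (measurableSet_singleton b)
      (hA.prod MeasurableSet.univ)
  set ψ : Bool → ℝ := fun c => if c = b then 1 else 0 with hψ
  set φ : 𝒳 × ℝ → ℝ := fun p => A.indicator (fun _ => (1 : ℝ)) p.1 * p.2 with hφ
  have hψm : Measurable ψ := measurable_of_countable ψ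
  have hφm : Measurable φ :=
    ((measurable_const.indicator hA).comp measurable_fst).mul measurable_snd
  have hindψφ : IndepFun (ψ ∘ Z) (φ ∘ W) μ := hind.comp hψm hφm
  have hmul : ∀ ω, (ψ ∘ Z) ω * (φ ∘ W) ω
      = (Z ⁻¹' {b} ∩ W ⁻¹' (A ×ˢ Set.univ)).indicator f ω := by
    intro ω
    by_cases h1 : Z ω = b <;> by_cases h2 : X ω ∈ A <;>
      simp [hψ, hφ, hW, Set.indicator_apply, h1, h2]
  have hint1 : ∫ ω, (ψ ∘ Z) ω ∂μ = (μ (Z ⁻¹' {b})).toReal := by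
    have h : (ψ ∘ Z) = (Z ⁻¹' {b}).indicator (fun _ => (1 : ℝ)) := by
      ext ω; by_cases h : Z ω = b <;> simp [hψ, Set.indicator_apply, h]
    rw [h, integral_indicator_const _ (hZ (measurableSet_singleton b))]
    simp
    rfl
  have hint2 : ∫ ω, (φ ∘ W) ω ∂μ = ∫ ω in {ω | X ω ∈ A}, f ω ∂μ := by
    have h : (φ ∘ W) = {ω | X ω ∈ A}.indicator f := by
      ext ω; by_cases h : X ω ∈ A <;> simp [hφ, hW, Set.indicator_apply, h]
    rw [h]
    exact integral_indicator (hX hA)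
  have hset_int : ∫ ω in Z ⁻¹' {b} ∩ W ⁻¹' (A ×ˢ Set.univ), f ω ∂μ
      = (μ (Z ⁻¹' {b})).toReal * ∫ ω in {ω | X ω ∈ A}, f ω ∂μ := by
    rw [← integral_indicator hsm]
    calc ∫ ω, (Z ⁻¹' {b} ∩ W ⁻¹' (A ×ˢ Set.univ)).indicator f ω ∂μ
        = ∫ ω, (ψ ∘ Z) ω * (φ ∘ W) ω ∂μ := by
          exact integral_congr_ae (Filter.Eventually.of_forall fun ω => (hmul ω).symm)
      _ = (∫ ω, (ψ ∘ Z) ω ∂μ) * ∫ ω, (φ ∘ W) ω ∂μ :=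
          hindψφ.integral_fun_mul_eq_mul_integral (hψm.comp hZ).aestronglyMeasurable
            (hφm.comp (hX.prodMk hfm)).aestronglyMeasurable
      _ = (μ (Z ⁻¹' {b})).toReal * ∫ ω in {ω | X ω ∈ A}, f ω ∂μ := by rw [hint1, hint2]
  rw [hsets, ProbabilityTheory.cond, ProbabilityTheory.cond, integral_smul_measure,
    integral_smul_measure, hμs, hset_int, hXA]
  have hp0 : μ (Z ⁻¹' {b}) ≠ 0 := by
    have : {ω | Z ω = b} = Z ⁻¹' {b} := rfl
    rw [← this]; exact hb.ne'
  have hpt : μ (Z ⁻¹' {b}) ≠ ⊤ := measure_ne_top μ _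
  have hq0 : μ {ω | X ω ∈ A} ≠ 0 := hApos.ne'
  have hqt : μ {ω | X ω ∈ A} ≠ ⊤ := measure_ne_top μ _
  rw [smul_eq_mul, smul_eq_mul, ENNReal.toReal_inv, ENNReal.toReal_inv, ENNReal.toReal_mul]
  have hp : (μ (Z ⁻¹' {b})).toReal ≠ 0 := ENNReal.toReal_ne_zero.mpr ⟨hp0, hpt⟩
  field_simp

/-- A covariate that determines the `LL` principal stratum identifies the survivor average
causal effect: if `LL = {X ∈ A}` up to null sets, then
`E[Y_T − Y_C | LL] = E[Y^obs | Z = T, X ∈ A] − E[Y^obs | Z = C, X ∈ A]`. -/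
theorem covariate_identifies_SACE
    {Ω 𝒳 : Type*} [MeasurableSpace Ω] [MeasurableSpace 𝒳]
    (μ : Measure Ω) [IsProbabilityMeasure μ]
    (Z S_T S_C : Ω → Bool) (Y_T Y_C : Ω → ℝ) (X : Ω → 𝒳) (A : Set 𝒳)
    (hZ : Measurable Z) (hST : Measurable S_T) (hSC : Measurable S_C)
    (hYT : Measurable Y_T) (hYC : Measurable Y_C)
    (hX : Measurable X) (hA : MeasurableSet A)
    (hLLX : {ω | S_T ω = true ∧ S_C ω = true} =ᵐ[μ] {ω | X ω ∈ A})
    (hpos : 0 < μ {ω | Z ω = true}) (hlt : μ {ω | Z ω = true} < 1)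
    (hindep : IndepFun Z (fun ω => (X ω, S_T ω, S_C ω, Y_T ω, Y_C ω)) μ)
    (hintT : Integrable Y_T μ) (hintC : Integrable Y_C μ)
    (hApos : 0 < μ {ω | X ω ∈ A}) :
    (∫ ω, (Y_T ω - Y_C ω) ∂μ[|{ω | S_T ω = true ∧ S_C ω = true}]) =
      (∫ ω, (if Z ω then Y_T ω else Y_C ω) ∂μ[|{ω | Z ω = true ∧ X ω ∈ A}])
        - ∫ ω, (if Z ω then Y_T ω else Y_C ω) ∂μ[|{ω | Z ω = false ∧ X ω ∈ A}] := by
  -- the conditional measures on LL and on {X ∈ A} agree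
  have hcondLL : μ[|{ω | S_T ω = true ∧ S_C ω = true}] = μ[|{ω | X ω ∈ A}] := by
    rw [ProbabilityTheory.cond, ProbabilityTheory.cond, measure_congr hLLX,
      Measure.restrict_congr_set hLLX]
  -- integrability under the conditional measure
  have hcond_int : ∀ g : Ω → ℝ, Integrable g μ → Integrable g (μ[|{ω | X ω ∈ A}]) := by
    intro g hg
    rw [ProbabilityTheory.cond]
    exact (hg.restrict).smul_measure (ENNReal.inv_ne_top.mpr hApos.ne')
  -- negative treatment probability
  have hneg : 0 < μ {ω | Z ω = false} := by
    have hc : {ω | Z ω = false} = {ω | Z ω = true}ᶜ := by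
      ext ω; simp
    have hm : MeasurableSet {ω | Z ω = true} := hZ (measurableSet_singleton true)
    rw [hc, measure_compl hm (measure_ne_top μ _)]
    simp only [measure_univ]
    exact tsub_pos_of_lt hlt
  -- independence for the two components we need
  have hindT : IndepFun Z (fun ω => (X ω, Y_T ω)) μ :=
    hindep.comp measurable_id
      (measurable_fst.prodMk
        (measurable_fst.comp (measurable_snd.comp (measurable_snd.comp measurable_snd))))
  have hindC : IndepFun Z (fun ω => (X ω, Y_C ω)) μ :=
    hindep.comp measurable_id
      (measurable_snd.comp (measurable_snd.comp (measurable_snd.comp measurable_snd)) |>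
        measurable_fst.prodMk)
  rw [hcondLL, integral_sub (hcond_int Y_T hintT) (hcond_int Y_C hintC)]
  have hT : (∫ ω, (if Z ω then Y_T ω else Y_C ω) ∂μ[|{ω | Z ω = true ∧ X ω ∈ A}])
      = ∫ ω, Y_T ω ∂μ[|{ω | X ω ∈ A}] := by
    rw [← aux_cond_integral_eq μ Z Y_T X A hZ hYT hintT hX hA hindT true hpos hApos]
    rw [ProbabilityTheory.cond, integral_smul_measure, integral_smul_measure]
    congr 1
    refine setIntegral_congr_fun
      ((hZ (measurableSet_singleton true)).inter (hX hA)) fun ω hω => ?_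
    simp [hω.1]
  have hC : (∫ ω, (if Z ω then Y_T ω else Y_C ω) ∂μ[|{ω | Z ω = false ∧ X ω ∈ A}])
      = ∫ ω, Y_C ω ∂μ[|{ω | X ω ∈ A}] := by
    rw [← aux_cond_integral_eq μ Z Y_C X A hZ hYC hintC hX hA hindC false hneg hApos]
    rw [ProbabilityTheory.cond, integral_smul_measure, integral_smul_measure]
    congr 1
    refine setIntegral_congr_fun
      ((hZ (measurableSet_singleton false)).inter (hX hA)) fun ω hω => ?_
    simp [hω.1]
  rw [hT, hC]
end

section
/- The observed-data distribution does not depend on the joint distribution of treatment and control potential outcomes beyond the strata probabilities and within-stratum marginals: suppose two probability measures P₁ and P₂ on potential-outcome vectors (S_T, S_C, Y_T, Y_C) assign the same probabilities to each of the four principal strata LL, LD, DL, DD, and for each stratum G the conditional distribution of Y_T given G under P₁ equals that under P₂, and the conditional distribution of Y_C given G under P₁ equals that under P₂. If in each case treatment assignment Z is independent of the potential outcomes with the same marginal P(Z = T), then the joint distributions of the observed data (Z, S^obs, Y^obs·1{S^obs = L}) under P₁ and P₂ coincide. -/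
open MeasureTheory ProbabilityTheory

section Aux

variable {Ω₁ Ω₂ : Type*} [MeasurableSpace Ω₁] [MeasurableSpace Ω₂]

lemma strata_inter_eq (μ₁ : Measure Ω₁) (μ₂ : Measure Ω₂)
    [IsFiniteMeasure μ₁] [IsFiniteMeasure μ₂]
    {s₁ : Set Ω₁} {s₂ : Set Ω₂} {Y₁ : Ω₁ → ℝ} {Y₂ : Ω₂ → ℝ}
    (hs₁ : MeasurableSet s₁)
    (hY₁ : Measurable Y₁) (hY₂ : Measurable Y₂)
    (hp : μ₁ s₁ = μ₂ s₂)
    (hc : Measure.map Y₁ (μ₁[|s₁]) = Measure.map Y₂ (μ₂[|s₂]))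
    {B : Set ℝ} (hB : MeasurableSet B)
    (hs₂ : MeasurableSet s₂) :
    μ₁ (s₁ ∩ Y₁ ⁻¹' B) = μ₂ (s₂ ∩ Y₂ ⁻¹' B) := by
  by_cases h0 : μ₁ s₁ = 0
  · have h0' : μ₂ s₂ = 0 := hp ▸ h0
    rw [measure_mono_null Set.inter_subset_left h0,
      measure_mono_null Set.inter_subset_left h0']
  · have h0' : μ₂ s₂ ≠ 0 := by rw [← hp]; exact h0
    have e₁ : μ₁ (s₁ ∩ Y₁ ⁻¹' B) = μ₁ s₁ * Measure.map Y₁ (μ₁[|s₁]) B := by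
      rw [Measure.map_apply hY₁ hB, cond_apply hs₁, ← mul_assoc,
        ENNReal.mul_inv_cancel h0 (measure_ne_top _ _), one_mul]
    have e₂ : μ₂ (s₂ ∩ Y₂ ⁻¹' B) = μ₂ s₂ * Measure.map Y₂ (μ₂[|s₂]) B := by
      rw [Measure.map_apply hY₂ hB, cond_apply hs₂, ← mul_assoc,
        ENNReal.mul_inv_cancel h0' (measure_ne_top _ _), one_mul]
    rw [e₁, e₂, hp, hc]

open scoped Classical in
lemma pair_preimage_measure {Ω : Type*} [MeasurableSpace Ω] (μ : Measure Ω)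
    {S : Ω → Bool} {Y : Ω → ℝ} {E : Set (Bool × ℝ)} (hS : Measurable S) (hY : Measurable Y)
    (hE : MeasurableSet E) :
    μ ((fun ω => (S ω, if S ω then Y ω else 0)) ⁻¹' E)
      = μ ({ω | S ω = true} ∩ Y ⁻¹' {y | ((true : Bool), y) ∈ E})
        + (if ((false : Bool), (0 : ℝ)) ∈ E then μ {ω | S ω = false} else 0) := by
  by_cases h0 : ((false : Bool), (0 : ℝ)) ∈ E
  · have hset : (fun ω => (S ω, if S ω then Y ω else 0)) ⁻¹' E
        = ({ω | S ω = true} ∩ Y ⁻¹' {y | ((true : Bool), y) ∈ E}) ∪ {ω | S ω = false} := by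
      ext ω; cases h : S ω <;> simp [h, h0]
    have hmf : MeasurableSet {ω | S ω = false} := hS (measurableSet_singleton false)
    rw [hset, if_pos h0, measure_union ?_ hmf]
    exact Set.disjoint_left.mpr fun ω h₁ h₂ => by
      simp only [Set.mem_inter_iff, Set.mem_setOf_eq] at h₁ h₂; simp [h₁.1] at h₂
  · have hset : (fun ω => (S ω, if S ω then Y ω else 0)) ⁻¹' E
        = {ω | S ω = true} ∩ Y ⁻¹' {y | ((true : Bool), y) ∈ E} := by
      ext ω; cases h : S ω <;> simp [h, h0]
    rw [hset, if_neg h0, add_zero]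

lemma map_pair_eq (μ₁ : Measure Ω₁) (μ₂ : Measure Ω₂)
    [IsProbabilityMeasure μ₁] [IsProbabilityMeasure μ₂]
    {S₁ : Ω₁ → Bool} {Y₁ : Ω₁ → ℝ} {S₂ : Ω₂ → Bool} {Y₂ : Ω₂ → ℝ}
    (hS₁ : Measurable S₁) (hY₁ : Measurable Y₁) (hS₂ : Measurable S₂) (hY₂ : Measurable Y₂)
    {A₁ B₁ : Set Ω₁} {A₂ B₂ : Set Ω₂}
    (hmA₁ : MeasurableSet A₁) (hmB₁ : MeasurableSet B₁)
    (hmA₂ : MeasurableSet A₂) (hmB₂ : MeasurableSet B₂)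
    (hpart₁ : {ω | S₁ ω = true} = A₁ ∪ B₁) (hd₁ : Disjoint A₁ B₁)
    (hpart₂ : {ω | S₂ ω = true} = A₂ ∪ B₂) (hd₂ : Disjoint A₂ B₂)
    (hA : μ₁ A₁ = μ₂ A₂) (hB : μ₁ B₁ = μ₂ B₂)
    (hcA : Measure.map Y₁ (μ₁[|A₁]) = Measure.map Y₂ (μ₂[|A₂]))
    (hcB : Measure.map Y₁ (μ₁[|B₁]) = Measure.map Y₂ (μ₂[|B₂])) :
    Measure.map (fun ω => (S₁ ω, if S₁ ω then Y₁ ω else 0)) μ₁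
      = Measure.map (fun ω => (S₂ ω, if S₂ ω then Y₂ ω else 0)) μ₂ := by
  have hf₁ : Measurable fun ω => (S₁ ω, if S₁ ω then Y₁ ω else 0) :=
    hS₁.prodMk (Measurable.ite (hS₁ (measurableSet_singleton true)) hY₁ measurable_const)
  have hf₂ : Measurable fun ω => (S₂ ω, if S₂ ω then Y₂ ω else 0) :=
    hS₂.prodMk (Measurable.ite (hS₂ (measurableSet_singleton true)) hY₂ measurable_const)
  have hT₁ : μ₁ {ω | S₁ ω = true} = μ₁ A₁ + μ₁ B₁ := by rw [hpart₁, measure_union hd₁ hmB₁]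
  have hT₂ : μ₂ {ω | S₂ ω = true} = μ₂ A₂ + μ₂ B₂ := by rw [hpart₂, measure_union hd₂ hmB₂]
  have hTeq : μ₁ {ω | S₁ ω = true} = μ₂ {ω | S₂ ω = true} := by rw [hT₁, hT₂, hA, hB]
  have hTeq' : μ₁ (S₁ ⁻¹' {true}) = μ₂ (S₂ ⁻¹' {true}) := hTeq
  have hF : μ₁ {ω | S₁ ω = false} = μ₂ {ω | S₂ ω = false} := by
    have c₁ : {ω | S₁ ω = false} = (S₁ ⁻¹' {true})ᶜ := by
      ext ω; simp [Bool.not_eq_true]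
    have c₂ : {ω | S₂ ω = false} = (S₂ ⁻¹' {true})ᶜ := by
      ext ω; simp [Bool.not_eq_true]
    rw [c₁, c₂, measure_compl (hS₁ (measurableSet_singleton true)) (measure_ne_top _ _),
      measure_compl (hS₂ (measurableSet_singleton true)) (measure_ne_top _ _),
      measure_univ, measure_univ, hTeq']
  ext E hE
  rw [Measure.map_apply hf₁ hE, Measure.map_apply hf₂ hE,
    pair_preimage_measure μ₁ hS₁ hY₁ hE, pair_preimage_measure μ₂ hS₂ hY₂ hE]
  have hPt : MeasurableSet {y : ℝ | ((true : Bool), y) ∈ E} := measurable_prodMk_left hE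
  have key : μ₁ ({ω | S₁ ω = true} ∩ Y₁ ⁻¹' {y | ((true : Bool), y) ∈ E})
      = μ₂ ({ω | S₂ ω = true} ∩ Y₂ ⁻¹' {y | ((true : Bool), y) ∈ E}) := by
    rw [hpart₁, hpart₂, Set.union_inter_distrib_right, Set.union_inter_distrib_right,
      measure_union (hd₁.mono Set.inter_subset_left Set.inter_subset_left)
        (hmB₁.inter (hY₁ hPt)),
      measure_union (hd₂.mono Set.inter_subset_left Set.inter_subset_left)
        (hmB₂.inter (hY₂ hPt)),
      strata_inter_eq μ₁ μ₂ hmA₁ hY₁ hY₂ hA hcA hPt hmA₂,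
      strata_inter_eq μ₁ μ₂ hmB₁ hY₁ hY₂ hB hcB hPt hmB₂]
  rw [key]
  by_cases h0 : ((false : Bool), (0 : ℝ)) ∈ E <;> simp [h0, hF]

lemma obs_split {Ω : Type*} (Z ST SC : Ω → Bool) (YT YC : Ω → ℝ) (E : Set (Bool × Bool × ℝ)) :
    (fun ω => (Z ω, (if Z ω then ST ω else SC ω),
      if (if Z ω then ST ω else SC ω) then (if Z ω then YT ω else YC ω) else 0)) ⁻¹' E
    = ({ω | Z ω = true} ∩ (fun ω => (ST ω, if ST ω then YT ω else 0)) ⁻¹' (Prod.mk true ⁻¹' E))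
      ∪ ({ω | Z ω = false}
          ∩ (fun ω => (SC ω, if SC ω then YC ω else 0)) ⁻¹' (Prod.mk false ⁻¹' E)) := by
  ext ω; cases h : Z ω <;> simp [h]

lemma bool_disjoint {Ω : Type*} (Z : Ω → Bool) (s t : Set Ω) :
    Disjoint ({ω | Z ω = true} ∩ s) ({ω | Z ω = false} ∩ t) :=
  Set.disjoint_left.mpr fun ω h₁ h₂ => by
    simp only [Set.mem_inter_iff, Set.mem_setOf_eq] at h₁ h₂; simp [h₁.1] at h₂

end Aux

/-- The observed-data distribution depends on the joint distribution of the potential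
outcomes only through the four principal-strata probabilities and the within-stratum
marginal distributions of `Y_T` and `Y_C`: if two randomized experiments with the same
treatment-assignment probability agree on all of these, then the distributions of the
observed data `(Z, S^obs, Y^obs·1{S^obs = L})` coincide. -/
theorem observed_data_dist_determined_by_strata_and_marginals
    {Ω₁ Ω₂ : Type*} [MeasurableSpace Ω₁] [MeasurableSpace Ω₂]
    (μ₁ : Measure Ω₁) (μ₂ : Measure Ω₂)
    [IsProbabilityMeasure μ₁] [IsProbabilityMeasure μ₂]
    (Z₁ ST₁ SC₁ : Ω₁ → Bool) (YT₁ YC₁ : Ω₁ → ℝ)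
    (Z₂ ST₂ SC₂ : Ω₂ → Bool) (YT₂ YC₂ : Ω₂ → ℝ)
    (hZ₁ : Measurable Z₁) (hST₁ : Measurable ST₁) (hSC₁ : Measurable SC₁)
    (hYT₁ : Measurable YT₁) (hYC₁ : Measurable YC₁)
    (hZ₂ : Measurable Z₂) (hST₂ : Measurable ST₂) (hSC₂ : Measurable SC₂)
    (hYT₂ : Measurable YT₂) (hYC₂ : Measurable YC₂)
    (hindep₁ : IndepFun Z₁ (fun ω => (ST₁ ω, SC₁ ω, YT₁ ω, YC₁ ω)) μ₁)
    (hindep₂ : IndepFun Z₂ (fun ω => (ST₂ ω, SC₂ ω, YT₂ ω, YC₂ ω)) μ₂)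
    (hZeq : μ₁ {ω | Z₁ ω = true} = μ₂ {ω | Z₂ ω = true})
    (hLL : μ₁ {ω | ST₁ ω = true ∧ SC₁ ω = true} = μ₂ {ω | ST₂ ω = true ∧ SC₂ ω = true})
    (hLD : μ₁ {ω | ST₁ ω = true ∧ SC₁ ω = false} = μ₂ {ω | ST₂ ω = true ∧ SC₂ ω = false})
    (hDL : μ₁ {ω | ST₁ ω = false ∧ SC₁ ω = true} = μ₂ {ω | ST₂ ω = false ∧ SC₂ ω = true})
    (hDD : μ₁ {ω | ST₁ ω = false ∧ SC₁ ω = false} = μ₂ {ω | ST₂ ω = false ∧ SC₂ ω = false})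
    (hYT_LL : Measure.map YT₁ (μ₁[|{ω | ST₁ ω = true ∧ SC₁ ω = true}]) =
      Measure.map YT₂ (μ₂[|{ω | ST₂ ω = true ∧ SC₂ ω = true}]))
    (hYT_LD : Measure.map YT₁ (μ₁[|{ω | ST₁ ω = true ∧ SC₁ ω = false}]) =
      Measure.map YT₂ (μ₂[|{ω | ST₂ ω = true ∧ SC₂ ω = false}]))
    (hYT_DL : Measure.map YT₁ (μ₁[|{ω | ST₁ ω = false ∧ SC₁ ω = true}]) =
      Measure.map YT₂ (μ₂[|{ω | ST₂ ω = false ∧ SC₂ ω = true}]))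
    (hYT_DD : Measure.map YT₁ (μ₁[|{ω | ST₁ ω = false ∧ SC₁ ω = false}]) =
      Measure.map YT₂ (μ₂[|{ω | ST₂ ω = false ∧ SC₂ ω = false}]))
    (hYC_LL : Measure.map YC₁ (μ₁[|{ω | ST₁ ω = true ∧ SC₁ ω = true}]) =
      Measure.map YC₂ (μ₂[|{ω | ST₂ ω = true ∧ SC₂ ω = true}]))
    (hYC_LD : Measure.map YC₁ (μ₁[|{ω | ST₁ ω = true ∧ SC₁ ω = false}]) =
      Measure.map YC₂ (μ₂[|{ω | ST₂ ω = true ∧ SC₂ ω = false}]))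
    (hYC_DL : Measure.map YC₁ (μ₁[|{ω | ST₁ ω = false ∧ SC₁ ω = true}]) =
      Measure.map YC₂ (μ₂[|{ω | ST₂ ω = false ∧ SC₂ ω = true}]))
    (hYC_DD : Measure.map YC₁ (μ₁[|{ω | ST₁ ω = false ∧ SC₁ ω = false}]) =
      Measure.map YC₂ (μ₂[|{ω | ST₂ ω = false ∧ SC₂ ω = false}])) :
    Measure.map (fun ω =>
        (Z₁ ω, (if Z₁ ω then ST₁ ω else SC₁ ω),
          if (if Z₁ ω then ST₁ ω else SC₁ ω) then (if Z₁ ω then YT₁ ω else YC₁ ω) else 0)) μ₁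
      = Measure.map (fun ω =>
        (Z₂ ω, (if Z₂ ω then ST₂ ω else SC₂ ω),
          if (if Z₂ ω then ST₂ ω else SC₂ ω) then (if Z₂ ω then YT₂ ω else YC₂ ω) else 0)) μ₂ := by
  -- measurability of strata
  have mtt₁ : MeasurableSet {ω | ST₁ ω = true ∧ SC₁ ω = true} :=
    (hST₁ (measurableSet_singleton true)).inter (hSC₁ (measurableSet_singleton true))
  have mtf₁ : MeasurableSet {ω | ST₁ ω = true ∧ SC₁ ω = false} :=
    (hST₁ (measurableSet_singleton true)).inter (hSC₁ (measurableSet_singleton false))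
  have mft₁ : MeasurableSet {ω | ST₁ ω = false ∧ SC₁ ω = true} :=
    (hST₁ (measurableSet_singleton false)).inter (hSC₁ (measurableSet_singleton true))
  have mtt₂ : MeasurableSet {ω | ST₂ ω = true ∧ SC₂ ω = true} :=
    (hST₂ (measurableSet_singleton true)).inter (hSC₂ (measurableSet_singleton true))
  have mtf₂ : MeasurableSet {ω | ST₂ ω = true ∧ SC₂ ω = false} :=
    (hST₂ (measurableSet_singleton true)).inter (hSC₂ (measurableSet_singleton false))
  have mft₂ : MeasurableSet {ω | ST₂ ω = false ∧ SC₂ ω = true} :=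
    (hST₂ (measurableSet_singleton false)).inter (hSC₂ (measurableSet_singleton true))
  -- the two per-arm observed distributions agree
  have claimT : Measure.map (fun ω => (ST₁ ω, if ST₁ ω then YT₁ ω else 0)) μ₁
      = Measure.map (fun ω => (ST₂ ω, if ST₂ ω then YT₂ ω else 0)) μ₂ := by
    refine map_pair_eq μ₁ μ₂ hST₁ hYT₁ hST₂ hYT₂ mtt₁ mtf₁ mtt₂ mtf₂ ?_ ?_ ?_ ?_ hLL hLD
      hYT_LL hYT_LD
    · ext ω; cases h : SC₁ ω <;> simp [h]
    · exact Set.disjoint_left.mpr fun ω h₁ h₂ => by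
        simp only [Set.mem_setOf_eq] at h₁ h₂; simp [h₁.2] at h₂
    · ext ω; cases h : SC₂ ω <;> simp [h]
    · exact Set.disjoint_left.mpr fun ω h₁ h₂ => by
        simp only [Set.mem_setOf_eq] at h₁ h₂; simp [h₁.2] at h₂
  have claimC : Measure.map (fun ω => (SC₁ ω, if SC₁ ω then YC₁ ω else 0)) μ₁
      = Measure.map (fun ω => (SC₂ ω, if SC₂ ω then YC₂ ω else 0)) μ₂ := by
    refine map_pair_eq μ₁ μ₂ hSC₁ hYC₁ hSC₂ hYC₂ mtt₁ mft₁ mtt₂ mft₂ ?_ ?_ ?_ ?_ hLL hDL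
      hYC_LL hYC_DL
    · ext ω; cases h : ST₁ ω <;> simp [h]
    · exact Set.disjoint_left.mpr fun ω h₁ h₂ => by
        simp only [Set.mem_setOf_eq] at h₁ h₂; simp [h₁.1] at h₂
    · ext ω; cases h : ST₂ ω <;> simp [h]
    · exact Set.disjoint_left.mpr fun ω h₁ h₂ => by
        simp only [Set.mem_setOf_eq] at h₁ h₂; simp [h₁.1] at h₂
  -- measurability of the composed maps
  have hgT : Measurable fun p : Bool × Bool × ℝ × ℝ => (p.1, if p.1 then p.2.2.1 else 0) :=
    measurable_fst.prodMk
      (Measurable.ite (measurable_fst (measurableSet_singleton true))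
        measurable_snd.snd.fst measurable_const)
  have hgC : Measurable fun p : Bool × Bool × ℝ × ℝ => (p.2.1, if p.2.1 then p.2.2.2 else 0) :=
    measurable_snd.fst.prodMk
      (Measurable.ite (measurable_snd.fst (measurableSet_singleton true))
        measurable_snd.snd.snd measurable_const)
  have hV₁ : Measurable fun ω => (ST₁ ω, SC₁ ω, YT₁ ω, YC₁ ω) :=
    hST₁.prodMk (hSC₁.prodMk (hYT₁.prodMk hYC₁))
  have hV₂ : Measurable fun ω => (ST₂ ω, SC₂ ω, YT₂ ω, YC₂ ω) :=
    hST₂.prodMk (hSC₂.prodMk (hYT₂.prodMk hYC₂))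
  -- independence of Z from each per-arm observed pair
  have hiT₁ : IndepFun Z₁ (fun ω => (ST₁ ω, if ST₁ ω then YT₁ ω else 0)) μ₁ :=
    hindep₁.comp measurable_id hgT
  have hiC₁ : IndepFun Z₁ (fun ω => (SC₁ ω, if SC₁ ω then YC₁ ω else 0)) μ₁ :=
    hindep₁.comp measurable_id hgC
  have hiT₂ : IndepFun Z₂ (fun ω => (ST₂ ω, if ST₂ ω then YT₂ ω else 0)) μ₂ :=
    hindep₂.comp measurable_id hgT
  have hiC₂ : IndepFun Z₂ (fun ω => (SC₂ ω, if SC₂ ω then YC₂ ω else 0)) μ₂ :=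
    hindep₂.comp measurable_id hgC
  have hfT₁ : Measurable fun ω => (ST₁ ω, if ST₁ ω then YT₁ ω else 0) := hgT.comp hV₁
  have hfC₁ : Measurable fun ω => (SC₁ ω, if SC₁ ω then YC₁ ω else 0) := hgC.comp hV₁
  have hfT₂ : Measurable fun ω => (ST₂ ω, if ST₂ ω then YT₂ ω else 0) := hgT.comp hV₂
  have hfC₂ : Measurable fun ω => (SC₂ ω, if SC₂ ω then YC₂ ω else 0) := hgC.comp hV₂
  have hobs₁ : Measurable fun ω =>
      (Z₁ ω, (if Z₁ ω then ST₁ ω else SC₁ ω),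
        if (if Z₁ ω then ST₁ ω else SC₁ ω) then (if Z₁ ω then YT₁ ω else YC₁ ω) else 0) := by
    have hS : Measurable fun ω => if Z₁ ω then ST₁ ω else SC₁ ω :=
      Measurable.ite (hZ₁ (measurableSet_singleton true)) hST₁ hSC₁
    exact hZ₁.prodMk (hS.prodMk (Measurable.ite (hS (measurableSet_singleton true))
      (Measurable.ite (hZ₁ (measurableSet_singleton true)) hYT₁ hYC₁) measurable_const))
  have hobs₂ : Measurable fun ω =>
      (Z₂ ω, (if Z₂ ω then ST₂ ω else SC₂ ω),
        if (if Z₂ ω then ST₂ ω else SC₂ ω) then (if Z₂ ω then YT₂ ω else YC₂ ω) else 0) := by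
    have hS : Measurable fun ω => if Z₂ ω then ST₂ ω else SC₂ ω :=
      Measurable.ite (hZ₂ (measurableSet_singleton true)) hST₂ hSC₂
    exact hZ₂.prodMk (hS.prodMk (Measurable.ite (hS (measurableSet_singleton true))
      (Measurable.ite (hZ₂ (measurableSet_singleton true)) hYT₂ hYC₂) measurable_const))
  have hZeq' : μ₁ (Z₁ ⁻¹' {true}) = μ₂ (Z₂ ⁻¹' {true}) := hZeq
  have hZF : μ₁ {ω | Z₁ ω = false} = μ₂ {ω | Z₂ ω = false} := by
    have c₁ : {ω | Z₁ ω = false} = (Z₁ ⁻¹' {true})ᶜ := by ext ω; simp [Bool.not_eq_true]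
    have c₂ : {ω | Z₂ ω = false} = (Z₂ ⁻¹' {true})ᶜ := by ext ω; simp [Bool.not_eq_true]
    rw [c₁, c₂, measure_compl (hZ₁ (measurableSet_singleton true)) (measure_ne_top _ _),
      measure_compl (hZ₂ (measurableSet_singleton true)) (measure_ne_top _ _),
      measure_univ, measure_univ, hZeq']
  ext E hE
  rw [Measure.map_apply hobs₁ hE, Measure.map_apply hobs₂ hE]
  set Pt : Set (Bool × ℝ) := Prod.mk true ⁻¹' E with hPtdef
  set Pf : Set (Bool × ℝ) := Prod.mk false ⁻¹' E with hPfdef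
  have hPt : MeasurableSet Pt := measurable_prodMk_left hE
  have hPf : MeasurableSet Pf := measurable_prodMk_left hE
  rw [obs_split Z₁ ST₁ SC₁ YT₁ YC₁ E, obs_split Z₂ ST₂ SC₂ YT₂ YC₂ E]
  rw [measure_union (bool_disjoint Z₁ _ _)
      ((hZ₁ (measurableSet_singleton false)).inter (hfC₁ hPf)),
    measure_union (bool_disjoint Z₂ _ _)
      ((hZ₂ (measurableSet_singleton false)).inter (hfC₂ hPf))]
  have eT₁ := hiT₁.measure_inter_preimage_eq_mul {true} Pt (measurableSet_singleton true) hPt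
  have eC₁ := hiC₁.measure_inter_preimage_eq_mul {false} Pf (measurableSet_singleton false) hPf
  have eT₂ := hiT₂.measure_inter_preimage_eq_mul {true} Pt (measurableSet_singleton true) hPt
  have eC₂ := hiC₂.measure_inter_preimage_eq_mul {false} Pf (measurableSet_singleton false) hPf
  calc μ₁ ({ω | Z₁ ω = true} ∩ (fun ω => (ST₁ ω, if ST₁ ω then YT₁ ω else 0)) ⁻¹' Pt)
        + μ₁ ({ω | Z₁ ω = false} ∩ (fun ω => (SC₁ ω, if SC₁ ω then YC₁ ω else 0)) ⁻¹' Pf)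
      = μ₁ {ω | Z₁ ω = true}
            * Measure.map (fun ω => (ST₁ ω, if ST₁ ω then YT₁ ω else 0)) μ₁ Pt
        + μ₁ {ω | Z₁ ω = false}
            * Measure.map (fun ω => (SC₁ ω, if SC₁ ω then YC₁ ω else 0)) μ₁ Pf := by
        rw [Measure.map_apply hfT₁ hPt, Measure.map_apply hfC₁ hPf]
        exact congrArg₂ (· + ·) eT₁ eC₁
    _ = μ₂ {ω | Z₂ ω = true}
            * Measure.map (fun ω => (ST₂ ω, if ST₂ ω then YT₂ ω else 0)) μ₂ Pt
        + μ₂ {ω | Z₂ ω = false}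
            * Measure.map (fun ω => (SC₂ ω, if SC₂ ω then YC₂ ω else 0)) μ₂ Pf := by
        rw [hZeq, hZF, claimT, claimC]
    _ = _ := by
        rw [Measure.map_apply hfT₂ hPt, Measure.map_apply hfC₂ hPf]
        exact (congrArg₂ (· + ·) eT₂ eC₂).symm
end
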